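/- For n ≥ k > 0, one has T(n,k,s) = (1/n) · ∑_{d | gcd(n,k)} (−1)^{k−k/d} c_d(s) · C(n/d, k/d), where c_d(s) = ∑_{j ∈ (Z/dZ)^*} e^{2πijs/d} is the Ramanujan sum. -/

import Mathlib

open Complex in
/-- The Ramanujan sum `c_d(s) = ∑_{j ∈ (ℤ/dℤ)^*} e^{2πijs/d}`. -/
noncomputable def ramanujanSum (d : ℕ) (s : ℤ) : ℂ :=
  ∑ j ∈ (Finset.range d).filter (fun j => Nat.Coprime j d),
    Complex.exp (2 * Real.pi * Complex.I * j * s / d)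

/-- `T n k s` is the number of `k`-element subsets of `ℤ/nℤ` whose sum of elements
is `s` modulo `n`. -/
noncomputable def T (n k : ℕ) (s : ℤ) : ℕ :=
  Nat.card {Q : Finset (ZMod n) // Q.card = k ∧ (∑ a ∈ Q, a) = (s : ZMod n)}

open Finset Polynomial in
lemma aux_prod_periodic {M : Type*} [CommMonoid M] (h : ℕ → M) (m g : ℕ)
    (hper : ∀ i, h (i + m) = h i) :
    ∏ i ∈ Finset.range (g * m), h i = (∏ i ∈ Finset.range m, h i) ^ g := by
  have key : ∀ t i, h (t * m + i) = h i := by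
    intro t
    induction t with
    | zero => simp
    | succ u ih =>
      intro i
      have : (u + 1) * m + i = (u * m + i) + m := by ring
      rw [this, hper, ih]
  induction g with
  | zero => simp
  | succ t ih =>
    have : (t + 1) * m = t * m + m := by ring
    rw [this, Finset.prod_range_add, ih, pow_succ]
    congr 1
    exact Finset.prod_congr rfl fun i _ => key t i

open Finset Polynomial in
lemma aux_coeff_prod_one_add {α : Type*} [DecidableEq α] (S : Finset α) (w : α → ℂ) (k : ℕ) :
    (∏ a ∈ S, (1 + Polynomial.C (w a) * Polynomial.X)).coeff k
      = ∑ Q ∈ S.powersetCard k, ∏ a ∈ Q, w a := by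
  have h1 : ∀ a ∈ S, (1 + Polynomial.C (w a) * Polynomial.X)
      = (Polynomial.C (w a) * Polynomial.X + 1) := fun a _ => add_comm _ _
  rw [Finset.prod_congr rfl h1, Finset.prod_add]
  have h2 : ∀ t ∈ S.powerset,
      (∏ a ∈ t, Polynomial.C (w a) * Polynomial.X) * (∏ _a ∈ S \ t, (1 : Polynomial ℂ))
        = Polynomial.C (∏ a ∈ t, w a) * Polynomial.X ^ t.card := by
    intro t _
    rw [Finset.prod_const_one, mul_one, Finset.prod_mul_distrib, Finset.prod_const, map_prod]
  rw [Finset.sum_congr rfl h2, Polynomial.finset_sum_coeff]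
  have h3 : ∀ t ∈ S.powerset,
      (Polynomial.C (∏ a ∈ t, w a) * Polynomial.X ^ t.card).coeff k
        = if t.card = k then ∏ a ∈ t, w a else 0 := by
    intro t _
    rw [Polynomial.coeff_C_mul, Polynomial.coeff_X_pow]
    split <;> simp_all [eq_comm]
  rw [Finset.sum_congr rfl h3, Finset.sum_ite, Finset.sum_const_zero, add_zero,
    Finset.powersetCard_eq_filter]

open Finset Polynomial in
lemma aux_prod_one_add_pow {m : ℕ} (hm : 0 < m) {η : ℂ} (hη : IsPrimitiveRoot η m) :
    ∏ i ∈ Finset.range m, (1 + Polynomial.C (η ^ i) * Polynomial.X)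
      = 1 - (-Polynomial.X) ^ m := by
  have key : (Polynomial.X ^ m - Polynomial.C (1:ℂ))
      = ∏ i ∈ Finset.range m, (Polynomial.X - Polynomial.C (η ^ i * 1)) :=
    X_pow_sub_C_eq_prod hη hm (one_pow m)
  apply Polynomial.funext
  intro z
  rw [Polynomial.eval_prod]
  simp only [Polynomial.eval_add, Polynomial.eval_one, Polynomial.eval_mul, Polynomial.eval_C,
    Polynomial.eval_X, Polynomial.eval_sub, Polynomial.eval_pow, Polynomial.eval_neg]
  rcases eq_or_ne z 0 with hz | hz
  · subst hz
    simp [zero_pow hm.ne']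
  · have hw := congrArg (Polynomial.eval (-z⁻¹)) key
    rw [Polynomial.eval_prod] at hw
    simp only [Polynomial.eval_sub, Polynomial.eval_pow, Polynomial.eval_X, Polynomial.eval_C,
      mul_one] at hw
    have h1 : ∀ i ∈ Finset.range m, (1 + η ^ i * z) = (-z) * (-z⁻¹ - η ^ i) := by
      intro i _
      field_simp
      ring
    rw [Finset.prod_congr rfl h1, Finset.prod_mul_distrib, Finset.prod_const, ← hw,
      Finset.card_range]
    have h2 : (-z) * (-z⁻¹) = 1 := by field_simp
    rw [mul_sub, ← mul_pow, h2, one_pow, mul_one]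

open Finset Polynomial in
lemma aux_coeff_pow {m g k : ℕ} (hm : 0 < m) (hk : k ≤ g * m) :
    ((1 - (-Polynomial.X : Polynomial ℂ) ^ m) ^ g).coeff k
      = if m ∣ k then (-1 : ℂ) ^ (k - k / m) * (Nat.choose g (k / m) : ℂ) else 0 := by
  have hc : (1 - (-Polynomial.X : Polynomial ℂ) ^ m)
      = Polynomial.C ((-1 : ℂ) ^ (m + 1)) * Polynomial.X ^ m + 1 := by
    simp only [map_pow, map_neg, map_one]
    rw [neg_pow, pow_succ]
    ring
  rw [hc, add_pow, Polynomial.finset_sum_coeff]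
  have h3 : ∀ i ∈ Finset.range (g + 1),
      ((Polynomial.C ((-1 : ℂ) ^ (m + 1)) * Polynomial.X ^ m) ^ i * 1 ^ (g - i)
          * (Nat.choose g i : Polynomial ℂ)).coeff k
        = if m * i = k then ((-1 : ℂ) ^ (m + 1)) ^ i * (Nat.choose g i : ℂ) else 0 := by
    intro i _
    have heq : (Polynomial.C ((-1 : ℂ) ^ (m + 1)) * Polynomial.X ^ m) ^ i * 1 ^ (g - i)
          * (Nat.choose g i : Polynomial ℂ)
        = Polynomial.C (((-1 : ℂ) ^ (m + 1)) ^ i * (Nat.choose g i : ℂ))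
            * Polynomial.X ^ (m * i) := by
      rw [one_pow, mul_one, mul_pow, ← pow_mul Polynomial.X m i, ← map_pow, map_mul,
        ← Polynomial.C_eq_natCast]
      ring
    rw [heq, Polynomial.coeff_C_mul, Polynomial.coeff_X_pow]
    split <;> rename_i h
    · rw [if_pos h.symm, mul_one]
    · rw [if_neg (fun hh => h hh.symm), mul_zero]
  rw [Finset.sum_congr rfl h3]
  by_cases hdvd : m ∣ k
  · rw [if_pos hdvd]
    obtain ⟨q, rfl⟩ := hdvd
    have hq : m * q / m = q := Nat.mul_div_cancel_left q hm
    have hqg : q ≤ g := by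
      have h1 : m * q ≤ m * g := by rw [mul_comm m g]; exact hk
      exact Nat.le_of_mul_le_mul_left h1 hm
    rw [Finset.sum_eq_single q]
    · rw [if_pos rfl, hq]
      congr 1
      rw [← pow_mul]
      have hqmq : q ≤ m * q := Nat.le_mul_of_pos_left q hm
      have h1 : (m + 1) * q = (m * q - q) + 2 * q := by
        have h2 : (m + 1) * q = m * q + q := by ring
        omega
      rw [h1, pow_add, pow_mul, neg_one_sq, one_pow, mul_one]
    · intro i _ hi
      rw [if_neg]
      intro hmi
      exact hi (Nat.eq_of_mul_eq_mul_left hm hmi)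
    · intro hq'
      exact absurd (Finset.mem_range.mpr (by omega)) hq'
  · rw [if_neg hdvd]
    apply Finset.sum_eq_zero
    intro i _
    rw [if_neg]
    intro hmi
    exact hdvd ⟨i, hmi.symm⟩

open Finset in
lemma aux_prod_eta_val {n : ℕ} [NeZero n] {η : ℂ} (hη : η ^ n = 1) (Q : Finset (ZMod n)) :
    ∏ a ∈ Q, η ^ (a.val) = η ^ ((∑ a ∈ Q, a).val) := by
  classical
  induction Q using Finset.cons_induction with
  | empty => simp
  | cons a Q ha ih =>
    rw [Finset.prod_cons, Finset.sum_cons, ih, ← pow_add,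
      pow_eq_pow_mod (a.val + (∑ b ∈ Q, b).val) hη, ZMod.val_add]

open Finset Polynomial in
lemma aux_esymm {n m k : ℕ} [NeZero n] (hk : k ≤ n) {η : ℂ}
    (hη : IsPrimitiveRoot η m) (hmn : m ∣ n) (hm : 0 < m) :
    ∑ Q ∈ Finset.powersetCard k (Finset.univ : Finset (ZMod n)), ∏ a ∈ Q, η ^ a.val
      = if m ∣ k then (-1 : ℂ) ^ (k - k / m) * (Nat.choose (n / m) (k / m) : ℂ) else 0 := by
  classical
  have hn : 0 < n := Nat.pos_of_ne_zero (NeZero.ne n)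
  have hηm : η ^ m = 1 := hη.pow_eq_one
  rw [← aux_coeff_prod_one_add]
  have hbij : ∏ a ∈ (Finset.univ : Finset (ZMod n)), (1 + Polynomial.C (η ^ a.val) * Polynomial.X)
      = ∏ i ∈ Finset.range n, (1 + Polynomial.C (η ^ i) * Polynomial.X) := by
    refine Finset.prod_nbij' (fun a => a.val) (fun i => (i : ZMod n)) ?_ ?_ ?_ ?_ ?_
    · intro a _; exact Finset.mem_range.mpr (ZMod.val_lt a)
    · intro i _; exact Finset.mem_univ _
    · intro a _; exact ZMod.natCast_rightInverse a
    · intro i hi; exact ZMod.val_cast_of_lt (Finset.mem_range.mp hi)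
    · intro a _; rfl
  rw [hbij]
  have hng : n = (n / m) * m := (Nat.div_mul_cancel hmn).symm
  have hper : ∀ i, (1 + Polynomial.C (η ^ (i + m)) * Polynomial.X)
      = (1 + Polynomial.C (η ^ i) * Polynomial.X) := by
    intro i
    rw [pow_add, hηm, mul_one]
  rw [hng, aux_prod_periodic _ m (n / m) hper, aux_prod_one_add_pow hm hη,
    aux_coeff_pow hm (hng ▸ hk)]
  rw [Nat.mul_div_cancel _ hm]

open Finset Complex in
lemma aux_ramanujanSum_eq (d : ℕ) (hd : 0 < d) (s : ℤ) :
    ramanujanSum d s = ∑ u ∈ (Finset.range d).filter (fun u => Nat.Coprime u d),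
      Complex.exp (2 * Real.pi * Complex.I / d) ^ (-((u : ℤ) * s)) := by
  set ζ : ℂ := Complex.exp (2 * Real.pi * Complex.I / d) with hζdef
  have hζ0 : ζ ≠ 0 := Complex.exp_ne_zero _
  have hζd : ζ ^ (d : ℤ) = 1 := by
    rw [hζdef, ← Complex.exp_int_mul]
    have : (d : ℂ) ≠ 0 := Nat.cast_ne_zero.mpr hd.ne'
    rw [show ((d : ℤ) : ℂ) * (2 * Real.pi * Complex.I / d) = 2 * Real.pi * Complex.I by
      push_cast; field_simp]
    exact Complex.exp_two_pi_mul_I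
  have hterm : ∀ u : ℕ, Complex.exp (2 * Real.pi * Complex.I * u * s / d)
      = ζ ^ ((u : ℤ) * s) := by
    intro u
    rw [hζdef, ← Complex.exp_int_mul]
    congr 1
    push_cast
    ring
  have hmap : ∀ u ∈ (Finset.range d).filter (fun u => Nat.Coprime u d),
      (d - u) % d ∈ (Finset.range d).filter (fun u => Nat.Coprime u d) := by
    intro u hu
    simp only [Finset.mem_filter, Finset.mem_range] at hu ⊢
    obtain ⟨hult, hcop⟩ := hu
    refine ⟨Nat.mod_lt _ hd, ?_⟩
    rcases Nat.eq_zero_or_pos u with rfl | hupos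
    · have hd1 : d = 1 := Nat.coprime_zero_left d |>.mp hcop
      subst hd1; simp
    · rw [Nat.mod_eq_of_lt (by omega)]
      have h1 : Nat.gcd (d - u) d = Nat.gcd u d := by
        rw [Nat.gcd_comm (d - u) d, ← Nat.gcd_sub_self_left (Nat.sub_le d u),
          Nat.sub_sub_self hult.le, Nat.gcd_sub_self_right hult.le, Nat.gcd_comm u d]
      exact h1.trans hcop
  have hinv : ∀ u ∈ (Finset.range d).filter (fun u => Nat.Coprime u d),
      (d - ((d - u) % d)) % d = u := by
    intro u hu
    simp only [Finset.mem_filter, Finset.mem_range] at hu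
    obtain ⟨hult, hcop⟩ := hu
    rcases Nat.eq_zero_or_pos u with rfl | hupos
    · simp
    · rw [Nat.mod_eq_of_lt (show d - u < d by omega), Nat.sub_sub_self hult.le,
        Nat.mod_eq_of_lt hult]
  unfold ramanujanSum
  rw [Finset.sum_congr rfl (fun u _ => hterm u)]
  refine Finset.sum_nbij' (fun u => (d - u) % d) (fun u => (d - u) % d)
    hmap hmap hinv hinv ?_
  intro u hu
  simp only [Finset.mem_filter, Finset.mem_range] at hu
  obtain ⟨hult, hcop⟩ := hu
  show ζ ^ ((u : ℤ) * s) = ζ ^ (-((((d - u) % d : ℕ) : ℤ) * s))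
  rcases Nat.eq_zero_or_pos u with rfl | hupos
  · simp
  · rw [Nat.mod_eq_of_lt (by omega : d - u < d), Nat.cast_sub hult.le]
    rw [show ((u : ℤ) * s) = (d : ℤ) * s + (-((((d : ℤ) - (u : ℤ))) * s)) by ring,
      zpow_add₀ hζ0, zpow_mul, hζd, one_zpow, one_mul]

open Finset Complex in
lemma aux_fiber_sum {n d : ℕ} (hn : 0 < n) (hdn : d ∣ n) (hdpos : 0 < d) (s : ℤ) :
    ∑ j ∈ (Finset.range n).filter (fun j => n / Nat.gcd n j = d),
      Complex.exp (2 * Real.pi * Complex.I / n) ^ (-((j : ℤ) * s)) = ramanujanSum d s := by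
  have he : 0 < n / d := Nat.div_pos (Nat.le_of_dvd hn hdn) hdpos
  have hde : d * (n / d) = n := Nat.mul_div_cancel' hdn
  have hdd : n / (n / d) = d := Nat.div_div_self hdn hn.ne'
  have hzz : Complex.exp (2 * Real.pi * Complex.I / n) ^ ((n / d : ℕ))
      = Complex.exp (2 * Real.pi * Complex.I / d) := by
    rw [← Complex.exp_nat_mul]
    congr 1
    have h2 : ((n / d : ℕ) : ℂ) * d = n := by
      rw [← Nat.cast_mul, mul_comm, hde]
    have hd0 : (d : ℂ) ≠ 0 := Nat.cast_ne_zero.mpr hdpos.ne'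
    have hn0 : (n : ℂ) ≠ 0 := Nat.cast_ne_zero.mpr hn.ne'
    field_simp
    exact h2
  rw [aux_ramanujanSum_eq d hdpos s]
  set e := n / d with hedef
  have hgval : ∀ j, j < n → n / Nat.gcd n j = d → Nat.gcd n j = e := by
    intro j _ hgcd
    rw [hedef, ← hgcd, Nat.div_div_self (Nat.gcd_dvd_left n j) hn.ne']
  refine Finset.sum_nbij' (fun j => j / e) (fun u => u * e) ?_ ?_ ?_ ?_ ?_
  · intro j hj
    simp only [Finset.mem_filter, Finset.mem_range] at hj ⊢
    obtain ⟨hjn, hgcd⟩ := hj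
    have hgv := hgval j hjn hgcd
    constructor
    · rw [Nat.div_lt_iff_lt_mul he, hde]
      exact hjn
    · have h2 : Nat.gcd d (j / e) * e = 1 * e := by
        rw [← Nat.gcd_mul_right, hde, Nat.div_mul_cancel (hgv ▸ Nat.gcd_dvd_right n j),
          one_mul]
        exact hgv
      have h3 := Nat.eq_of_mul_eq_mul_right he h2
      exact Nat.Coprime.symm h3
  · intro u hu
    simp only [Finset.mem_filter, Finset.mem_range] at hu ⊢
    obtain ⟨hud, hcop⟩ := hu
    have hgcd2 : Nat.gcd n (u * e) = e := by
      conv_lhs => rw [← hde]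
      rw [Nat.gcd_mul_right, Nat.Coprime.gcd_eq_one hcop.symm, one_mul]
    constructor
    · calc u * e < d * e := (Nat.mul_lt_mul_right he).mpr hud
        _ = n := hde
    · rw [hgcd2]
      exact hdd
  · intro j hj
    simp only [Finset.mem_filter, Finset.mem_range] at hj
    obtain ⟨hjn, hgcd⟩ := hj
    exact Nat.div_mul_cancel ((hgval j hjn hgcd) ▸ Nat.gcd_dvd_right n j)
  · intro u _
    exact Nat.mul_div_cancel _ he
  · intro j hj
    simp only [Finset.mem_filter, Finset.mem_range] at hj
    obtain ⟨hjn, hgcd⟩ := hj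
    have hjj : (j / e) * e = j :=
      Nat.div_mul_cancel ((hgval j hjn hgcd) ▸ Nat.gcd_dvd_right n j)
    show _ = Complex.exp (2 * Real.pi * Complex.I / d) ^ (-(((j / e : ℕ) : ℤ) * s))
    rw [← hzz, ← zpow_natCast (Complex.exp (2 * Real.pi * Complex.I / n)) e, ← zpow_mul]
    congr 1
    set u := j / e with hu
    rw [← hjj]
    push_cast
    ring

/-- `T(n,k,s) = (1/n) ∑_{d ∣ gcd(n,k)} (−1)^{k−k/d} c_d(s) C(n/d, k/d)`. -/
theorem stmt_6 (n k : ℕ) (hk : 0 < k) (hkn : k ≤ n) (s : ℤ) :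
    (T n k s : ℂ) * n =
      ∑ d ∈ (Nat.gcd n k).divisors,
        (-1) ^ (k - k / d) * ramanujanSum d s * (Nat.choose (n / d) (k / d) : ℂ) := by
  classical
  have hn : 0 < n := hk.trans_le hkn
  haveI : NeZero n := ⟨hn.ne'⟩
  set ζ : ℂ := Complex.exp (2 * Real.pi * Complex.I / n) with hζdef
  have hζ : IsPrimitiveRoot ζ n := Complex.isPrimitiveRoot_exp n hn.ne'
  have hζ0 : ζ ≠ 0 := Complex.exp_ne_zero _
  have hζn : ζ ^ n = 1 := hζ.pow_eq_one
  -- Step A : express `T * n` as a sum of indicators over `k`-subsets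
  have hTcard : T n k s = ((Finset.powersetCard k (Finset.univ : Finset (ZMod n))).filter
      (fun Q => (∑ a ∈ Q, a) = (s : ZMod n))).card := by
    rw [T, Nat.card_eq_fintype_card, Fintype.card_subtype]
    congr 1
    ext Q
    simp [Finset.mem_powersetCard_univ]
  have hT : (T n k s : ℂ) * n
      = ∑ Q ∈ Finset.powersetCard k (Finset.univ : Finset (ZMod n)),
          (if (∑ a ∈ Q, a) = (s : ZMod n) then (n : ℂ) else 0) := by
    rw [Finset.sum_ite, Finset.sum_const_zero, add_zero, Finset.sum_const, nsmul_eq_mul,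
      hTcard]
  -- Step B : orthogonality of characters
  have horth : ∀ Q : Finset (ZMod n),
      (if (∑ a ∈ Q, a) = (s : ZMod n) then (n : ℂ) else 0)
        = ∑ j ∈ Finset.range n, (ζ ^ ((((∑ a ∈ Q, a).val : ℤ) - s))) ^ j := by
    intro Q
    have hv : ((((∑ a ∈ Q, a).val : ℤ)) : ZMod n) = ∑ a ∈ Q, a := by
      rw [Int.cast_natCast]
      exact ZMod.natCast_rightInverse _
    have hiff : (∑ a ∈ Q, a) = (s : ZMod n) ↔ (n : ℤ) ∣ (((∑ a ∈ Q, a).val : ℤ) - s) := by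
      rw [← ZMod.intCast_zmod_eq_zero_iff_dvd, Int.cast_sub, hv, sub_eq_zero]
    by_cases hcase : ζ ^ ((((∑ a ∈ Q, a).val : ℤ) - s)) = 1
    · rw [if_pos (hiff.mpr ((hζ.zpow_eq_one_iff_dvd _).mp hcase)), hcase]
      simp
    · rw [if_neg (fun h => hcase ((hζ.zpow_eq_one_iff_dvd _).mpr (hiff.mp h))),
        geom_sum_eq hcase]
      have hx : (ζ ^ ((((∑ a ∈ Q, a).val : ℤ) - s))) ^ n = 1 := by
        rw [← zpow_natCast, ← zpow_mul, mul_comm, zpow_mul, zpow_natCast, hζn, one_zpow]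
      rw [hx, sub_self, zero_div]
  rw [hT, Finset.sum_congr rfl (fun Q _ => horth Q), Finset.sum_comm]
  -- Step C : compute the inner sum for fixed `j`
  have hinner : ∀ j ∈ Finset.range n,
      ∑ Q ∈ Finset.powersetCard k (Finset.univ : Finset (ZMod n)),
          (ζ ^ ((((∑ a ∈ Q, a).val : ℤ) - s))) ^ j
        = ζ ^ (-((j : ℤ) * s)) * (if (n / Nat.gcd n j) ∣ k then
            (-1 : ℂ) ^ (k - k / (n / Nat.gcd n j))
              * (Nat.choose (n / (n / Nat.gcd n j)) (k / (n / Nat.gcd n j)) : ℂ) else 0) := by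
    intro j hj
    set g := Nat.gcd n j with hgdef
    have hgpos : 0 < g := Nat.gcd_pos_of_pos_left j hn
    have hgn : g ∣ n := Nat.gcd_dvd_left n j
    have hgj : g ∣ j := Nat.gcd_dvd_right n j
    set m := n / g with hmdef
    have hmpos : 0 < m := Nat.div_pos (Nat.le_of_dvd hn hgn) hgpos
    have hmn : m ∣ n := Nat.div_dvd_of_dvd hgn
    have hprim : IsPrimitiveRoot (ζ ^ j) m := by
      have h1 : IsPrimitiveRoot (ζ ^ g) m := hζ.pow hn (Nat.mul_div_cancel' hgn).symm
      have h2 : (ζ ^ g) ^ (j / g) = ζ ^ j := by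
        rw [← pow_mul, Nat.mul_div_cancel' hgj]
      have hcop : Nat.Coprime (j / g) m := (Nat.coprime_div_gcd_div_gcd hgpos).symm
      exact h2 ▸ h1.pow_of_coprime (j / g) hcop
    have hηn : (ζ ^ j) ^ n = 1 := by
      rw [← pow_mul, mul_comm, pow_mul, hζn, one_pow]
    have hterm : ∀ Q : Finset (ZMod n),
        (ζ ^ ((((∑ a ∈ Q, a).val : ℤ) - s))) ^ j
          = ζ ^ (-((j : ℤ) * s)) * ∏ a ∈ Q, (ζ ^ j) ^ a.val := by
      intro Q
      rw [aux_prod_eta_val hηn Q, ← pow_mul, ← zpow_natCast ζ (j * (∑ a ∈ Q, a).val),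
        ← zpow_add₀ hζ0, ← zpow_natCast (ζ ^ ((((∑ a ∈ Q, a).val : ℤ) - s))) j, ← zpow_mul]
      congr 1
      push_cast
      ring
    rw [Finset.sum_congr rfl (fun Q _ => hterm Q), ← Finset.mul_sum,
      aux_esymm hkn hprim hmn hmpos]
  rw [Finset.sum_congr rfl hinner]
  -- Step D : group the `j`-sum by `d = n / gcd n j`
  have hmap : ∀ j ∈ Finset.range n, n / Nat.gcd n j ∈ n.divisors := by
    intro j _
    exact Nat.mem_divisors.mpr ⟨Nat.div_dvd_of_dvd (Nat.gcd_dvd_left n j), hn.ne'⟩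
  rw [← Finset.sum_fiberwise_of_maps_to hmap]
  have hfib : ∀ d ∈ n.divisors,
      ∑ j ∈ (Finset.range n).filter (fun j => n / Nat.gcd n j = d),
          ζ ^ (-((j : ℤ) * s)) * (if (n / Nat.gcd n j) ∣ k then
            (-1 : ℂ) ^ (k - k / (n / Nat.gcd n j))
              * (Nat.choose (n / (n / Nat.gcd n j)) (k / (n / Nat.gcd n j)) : ℂ) else 0)
        = (if d ∣ k then
            (-1 : ℂ) ^ (k - k / d) * (Nat.choose (n / d) (k / d) : ℂ) else 0)
            * ramanujanSum d s := by
    intro d hd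
    obtain ⟨hddvd, -⟩ := Nat.mem_divisors.mp hd
    have hdpos : 0 < d := Nat.pos_of_mem_divisors hd
    have step : ∀ j ∈ (Finset.range n).filter (fun j => n / Nat.gcd n j = d),
        ζ ^ (-((j : ℤ) * s)) * (if (n / Nat.gcd n j) ∣ k then
            (-1 : ℂ) ^ (k - k / (n / Nat.gcd n j))
              * (Nat.choose (n / (n / Nat.gcd n j)) (k / (n / Nat.gcd n j)) : ℂ) else 0)
          = (if d ∣ k then
              (-1 : ℂ) ^ (k - k / d) * (Nat.choose (n / d) (k / d) : ℂ) else 0)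
              * ζ ^ (-((j : ℤ) * s)) := by
      intro j hjmem
      rw [Finset.mem_filter] at hjmem
      rw [hjmem.2, mul_comm]
    rw [Finset.sum_congr rfl step, ← Finset.mul_sum, aux_fiber_sum hn hddvd hdpos s]
  rw [Finset.sum_congr rfl hfib]
  -- Step E : restrict to divisors of `gcd n k`
  have hsplit : ∀ d ∈ n.divisors,
      (if d ∣ k then
        (-1 : ℂ) ^ (k - k / d) * (Nat.choose (n / d) (k / d) : ℂ) else 0) * ramanujanSum d s
      = (if d ∣ k then
        (-1 : ℂ) ^ (k - k / d) * ramanujanSum d s * (Nat.choose (n / d) (k / d) : ℂ) else 0) := by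
    intro d _
    split
    · ring
    · rw [zero_mul]
  rw [Finset.sum_congr rfl hsplit, ← Finset.sum_filter]
  congr 1
  ext e
  simp only [Finset.mem_filter, Nat.mem_divisors, Nat.dvd_gcd_iff]
  constructor
  · rintro ⟨⟨h1, h2⟩, h3⟩
    exact ⟨⟨h1, h3⟩, fun h => hn.ne' (Nat.eq_zero_of_gcd_eq_zero_left h)⟩
  · rintro ⟨⟨h1, h3⟩, h2⟩
    exact ⟨⟨h1, hn.ne'⟩, h3⟩
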